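/- Let $\mathcal{C}_\mathcal{P}(d)$ be the toric code of degree $d$ over the $d$-th hypersimplex of $\mathbb{R}^s$ ($s \ge 2$, $1 \le d \le s$) and let $\delta(\mathcal{C}_\mathcal{P}(d))$ be its minimum distance. Then $\delta(\mathcal{C}_\mathcal{P}(d)) = (q-2)^d(q-1)^{s-d}$ if $d \le s/2$ and $q \ge 3$; $\delta(\mathcal{C}_\mathcal{P}(d)) = (q-2)^{s-d}(q-1)^{d}$ if $s/2 < d < s$ and $q \ge 3$; $\delta(\mathcal{C}_\mathcal{P}(d)) = (q-1)^{s}$ if $d = s$; and $\delta(\mathcal{C}_\mathcal{P}(d)) = 1$ if $q = 2$. -/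

import Mathlib

open MvPolynomial
open scoped MonomialOrder

variable {K : Type*} [Field K] {s : ℕ}

/-- The exponent of the initial (leading) monomial of `f` with respect to the
monomial order `m` (it is `0` for `f = 0`). -/
noncomputable def leadExp (m : MonomialOrder (Fin s)) (f : MvPolynomial (Fin s) K) :
    Fin s →₀ ℕ :=
  m.toSyn.symm (f.support.sup fun a => m.toSyn a)

/-- The coefficient of the initial monomial of `f`; `f` is monic when this is `1`. -/
noncomputable def leadCoeff (m : MonomialOrder (Fin s)) (f : MvPolynomial (Fin s) K) : K :=
  f.coeff (leadExp m f)

/-- The initial monomial `in_≺(f)` of `f`, as a (monic) monomial of the polynomial ring. -/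
noncomputable def leadMon (m : MonomialOrder (Fin s)) (f : MvPolynomial (Fin s) K) :
    MvPolynomial (Fin s) K :=
  monomial (leadExp m f) (1 : K)

/-- The initial ideal `in_≺(I)` of an ideal `I`: the ideal generated by the initial
monomials of the nonzero elements of `I`. -/
noncomputable def initialIdeal (m : MonomialOrder (Fin s)) (I : Ideal (MvPolynomial (Fin s) K)) :
    Ideal (MvPolynomial (Fin s) K) :=
  Ideal.span { g | ∃ f ∈ I, f ≠ 0 ∧ g = leadMon m f }

/-- The footprint `Δ_≺(I)` of `S/I`: the set of standard monomials, i.e. the (monic)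
monomials that do not belong to the initial ideal of `I`. -/
noncomputable def stdMonomials (m : MonomialOrder (Fin s)) (I : Ideal (MvPolynomial (Fin s) K)) :
    Set (MvPolynomial (Fin s) K) :=
  { g | (∃ a : Fin s →₀ ℕ, g = monomial a (1 : K)) ∧ g ∉ initialIdeal m I }

/-- `KΔ_≺(I)`, the `K`-linear span of the standard monomials of `S/I`. -/
noncomputable def stdSpan (m : MonomialOrder (Fin s)) (I : Ideal (MvPolynomial (Fin s) K)) :
    Submodule K (MvPolynomial (Fin s) K) :=
  Submodule.span K (stdMonomials m I)

/-- A monomial order is graded if monomials are first compared by their total degrees. -/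
def IsGradedOrder (m : MonomialOrder (Fin s)) : Prop :=
  ∀ a b : Fin s →₀ ℕ, a.degree < b.degree → a ≺[m] b

/-- The vanishing ideal `I(X)` of a set of points `X ⊆ 𝔸^s = K^s`. -/
def affVanishingIdeal (X : Set (Fin s → K)) : Ideal (MvPolynomial (Fin s) K) where
  carrier := { f | ∀ x ∈ X, eval x f = 0 }
  add_mem' := by
    intro a b ha hb x hx
    simp [ha x hx, hb x hx]
  zero_mem' := by intro x hx; simp
  smul_mem' := by
    intro c f hf x hx
    simp [smul_eq_mul, hf x hx]

/-- The evaluation map `S → K^X`, `f ↦ (f(P₁),…,f(P_m))`, at the points of a finite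
set `X` of points of `𝔸^s`. -/
noncomputable def evalMap (X : Finset (Fin s → K)) :
    MvPolynomial (Fin s) K →ₗ[K] (X → K) where
  toFun f := fun x => eval (x : Fin s → K) f
  map_add' f g := by funext x; simp
  map_smul' c f := by funext x; simp [Algebra.smul_def]

/-- The degree `deg(S/I)`.  For the ideals considered in this paper `S/I` is a
zero-dimensional ring, and its degree (the normalized leading coefficient of the
affine Hilbert polynomial) equals `dim_K (S/I)` (and is `0` when `I = S`). -/
noncomputable def adeg (I : Ideal (MvPolynomial (Fin s) K)) : ℕ :=
  Module.finrank K (MvPolynomial (Fin s) K ⧸ I)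

/-- The affine Hilbert function `H_I^a(d) = dim_K (S_{≤d}/I_{≤d})`, computed as the
dimension of the image of `S_{≤d}` in `S/I`. -/
noncomputable def affineHilbert (I : Ideal (MvPolynomial (Fin s) K)) (d : ℕ) : ℕ :=
  Module.finrank K
    ((restrictTotalDegree (Fin s) K d).map (Submodule.restrictScalars K I).mkQ)

/-- The support `χ(D)` of a subcode `D ⊆ K^ι`. -/
def codeSupport {ι : Type*} (D : Submodule K (ι → K)) : Set ι :=
  { i | ∃ v ∈ D, v i ≠ 0 }

/-- The `r`-th generalized Hamming weight of a linear code `C ⊆ K^ι`: the minimum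
size of the support of an `r`-dimensional subcode. -/
noncomputable def ghw {ι : Type*} (C : Submodule K (ι → K)) (r : ℕ) : ℕ :=
  sInf { n | ∃ D : Submodule K (ι → K),
    D ≤ C ∧ Module.finrank K (↥D) = r ∧ (codeSupport D).ncard = n }

/-- The minimum distance of a linear code: the least Hamming weight of a nonzero
codeword. -/
noncomputable def minDist {ι : Type*} (C : Submodule K (ι → K)) : ℕ :=
  sInf { n | ∃ v ∈ C, v ≠ 0 ∧ ({ i : ι | v i ≠ 0 }).ncard = n }

/-- The affine torus `T = (K^*)^s`. -/
noncomputable def torus (K : Type*) [Field K] [Fintype K] (s : ℕ) : Finset (Fin s → K) :=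
  letI := Classical.decEq K
  Finset.univ.filter fun x => ∀ i, x i ≠ 0

/-- `V_d`: the set of squarefree (monic) monomials of degree `d`. -/
def sqfreeMonomials (K : Type*) [Field K] (s d : ℕ) : Set (MvPolynomial (Fin s) K) :=
  { g | ∃ a : Fin s →₀ ℕ, (∀ i, a i ≤ 1) ∧ a.degree = d ∧ g = monomial a (1 : K) }

/-- `V_{≤d}`: the set of squarefree (monic) monomials of degree at most `d`. -/
def sqfreeMonomialsLe (K : Type*) [Field K] (s d : ℕ) : Set (MvPolynomial (Fin s) K) :=
  { g | ∃ a : Fin s →₀ ℕ, (∀ i, a i ≤ 1) ∧ a.degree ≤ d ∧ g = monomial a (1 : K) }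

section AuxCombinatorics
variable {K : Type*} [Field K]

def bsize {s : ℕ} (a : Fin s → Bool) : ℕ := ∑ i, (bif a i then 1 else 0)

def Vv {s : ℕ} (c : (Fin s → Bool) → K) (x : Fin s → Kˣ) : K :=
  ∑ a : Fin s → Bool, c a * ∏ i, (bif a i then (x i : K) else 1)

noncomputable def wt {s : ℕ} (c : (Fin s → Bool) → K) : ℕ :=
  {x : Fin s → Kˣ | Vv c x ≠ 0}.ncard

lemma bsize_le {s : ℕ} (a : Fin s → Bool) : bsize a ≤ s := by
  calc bsize a ≤ ∑ _i : Fin s, 1 := Finset.sum_le_sum (fun i _ => by cases a i <;> simp)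
  _ = s := by simp

lemma bsize_cons {s : ℕ} (b : Bool) (a : Fin s → Bool) :
    bsize (Fin.cons b a) = (bif b then 1 else 0) + bsize a := by
  unfold bsize
  rw [Fin.sum_univ_succ]
  simp

def consEquivBool (s : ℕ) : (Bool × (Fin s → Bool)) ≃ (Fin (s+1) → Bool) :=
  { toFun := fun p => Fin.cons p.1 p.2
    invFun := fun a => (a 0, Fin.tail a)
    left_inv := fun p => by simp [Fin.tail_cons]
    right_inv := fun a => by simp [Fin.cons_self_tail] }

lemma Vv_cons {s : ℕ} (c : (Fin (s+1) → Bool) → K) (u : Kˣ) (y : Fin s → Kˣ) :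
    Vv c (Fin.cons u y) =
      Vv (fun a => c (Fin.cons false a)) y + (u : K) * Vv (fun a => c (Fin.cons true a)) y := by
  unfold Vv
  rw [show (∑ a : Fin (s+1) → Bool, c a * ∏ i, (bif a i then ((Fin.cons u y : Fin (s+1) → Kˣ) i : K) else 1))
      = ∑ p : Bool × (Fin s → Bool), c (Fin.cons p.1 p.2) *
          ∏ i, (bif (Fin.cons p.1 p.2 : Fin (s+1) → Bool) i then ((Fin.cons u y : Fin (s+1) → Kˣ) i : K) else 1)
    from (Fintype.sum_equiv (consEquivBool s) _ _ (fun p => rfl)).symm]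
  rw [Fintype.sum_prod_type, Fintype.sum_bool, Finset.mul_sum, add_comm]
  congr 1
  · apply Finset.sum_congr rfl
    intro a _
    rw [Fin.prod_univ_succ]
    simp only [Fin.cons_zero, Fin.cons_succ, cond_true, cond_false]
    ring
  · apply Finset.sum_congr rfl
    intro a _
    rw [Fin.prod_univ_succ]
    simp only [Fin.cons_zero, Fin.cons_succ, cond_true, cond_false]
    ring

lemma Vv_add {s : ℕ} (c d : (Fin s → Bool) → K) (x : Fin s → Kˣ) :
    Vv (fun a => c a + d a) x = Vv c x + Vv d x := by
  unfold Vv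
  rw [← Finset.sum_add_distrib]
  exact Finset.sum_congr rfl (fun a _ => by ring)

lemma Vv_smul {s : ℕ} (r : K) (c : (Fin s → Bool) → K) (x : Fin s → Kˣ) :
    Vv (fun a => r * c a) x = r * Vv c x := by
  unfold Vv
  rw [Finset.mul_sum]
  exact Finset.sum_congr rfl (fun a _ => by ring)

lemma ncard_cons {K : Type*} [Field K] [Fintype K] [DecidableEq K] {n : ℕ}
    (P : (Fin (n+1) → Kˣ) → Prop) :
    {x : Fin (n+1) → Kˣ | P x}.ncard = ∑ u : Kˣ, {y : Fin n → Kˣ | P (Fin.cons u y)}.ncard := by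
  classical
  have e : ↑{x : Fin (n+1) → Kˣ | P x} ≃ (Σ u : Kˣ, ↑{y : Fin n → Kˣ | P (Fin.cons u y)}) :=
    { toFun := fun x => ⟨x.1 0, Fin.tail x.1, by
        show P _
        rw [Fin.cons_self_tail]; exact x.2⟩
      invFun := fun p => ⟨Fin.cons p.1 p.2.1, p.2.2⟩
      left_inv := fun x => Subtype.ext (Fin.cons_self_tail x.1)
      right_inv := fun p => rfl }
  rw [← Nat.card_coe_set_eq, Nat.card_congr e, Nat.card_eq_fintype_card, Fintype.card_sigma]
  exact Finset.sum_congr rfl (fun u _ => by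
    rw [← Nat.card_coe_set_eq, Nat.card_eq_fintype_card])

end AuxCombinatorics

section Lower
variable {K : Type*} [Field K] [Fintype K] [DecidableEq K]

lemma wt_cons {n : ℕ} (c : (Fin (n+1) → Bool) → K) :
    wt c = ∑ u : Kˣ, wt (fun a => c (Fin.cons false a) + (u : K) * c (Fin.cons true a)) := by
  rw [wt, ncard_cons (fun x => Vv c x ≠ 0)]
  apply Finset.sum_congr rfl
  intro u _
  congr 1
  ext y
  simp only [Set.mem_setOf_eq, Vv_cons]
  constructor
  · intro h h'
    apply h
    rw [show (fun a => c (Fin.cons false a) + (u : K) * c (Fin.cons true a))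
        = fun a => c (Fin.cons false a) + (fun a => (u:K) * c (Fin.cons true a)) a from rfl,
      Vv_add, Vv_smul] at h'
    exact h'
  · intro h h'
    apply h
    rw [show (fun a => c (Fin.cons false a) + (u : K) * c (Fin.cons true a))
        = fun a => c (Fin.cons false a) + (fun a => (u:K) * c (Fin.cons true a)) a from rfl,
      Vv_add, Vv_smul]
    exact h'

lemma wt_smul {n : ℕ} (r : K) (c : (Fin n → Bool) → K) (hr : r ≠ 0) :
    wt (fun a => r * c a) = wt c := by
  unfold wt
  congr 1
  ext x
  simp only [Set.mem_setOf_eq, Vv_smul, mul_ne_zero_iff]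
  tauto

lemma wt_pos_zero {c : (Fin 0 → Bool) → K} (hc : c ≠ 0) : 1 ≤ wt c := by
  have huniv : (Finset.univ : Finset (Fin 0 → Bool)) = {fun _ => false} :=
    Finset.eq_singleton_iff_unique_mem.mpr
      ⟨Finset.mem_univ _, fun x _ => funext fun i => i.elim0⟩
  have hx : Vv c (fun _ => 1) ≠ 0 := by
    unfold Vv
    rw [huniv, Finset.sum_singleton, show (Finset.univ : Finset (Fin 0)) = ∅ from rfl,
      Finset.prod_empty, mul_one]
    intro h
    apply hc
    funext a
    rw [Pi.zero_apply, show a = (fun _ => false) from funext fun i => i.elim0]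
    exact h
  exact (Set.ncard_pos (Set.toFinite _)).mpr ⟨_, hx⟩

lemma ne_zero_iff_exists {α : Type*} {c : α → K} : c ≠ 0 ↔ ∃ a, c a ≠ 0 := by
  constructor
  · intro h
    by_contra h'
    push_neg at h'
    exact h (funext h')
  · rintro ⟨a, ha⟩ h
    exact ha (by rw [h]; rfl)

lemma aux_pow_mono (Q : ℕ) {s d d' : ℕ} (hdd' : d ≤ d') (h' : d' ≤ s) :
    (Q-1)^d' * Q^(s-d') ≤ (Q-1)^d * Q^(s-d) := by
  have h1 : (Q-1)^d' ≤ (Q-1)^d * Q^(d'-d) := by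
    calc (Q-1)^d' = (Q-1)^d * (Q-1)^(d'-d) := by rw [← pow_add]; congr 1; omega
    _ ≤ (Q-1)^d * Q^(d'-d) := Nat.mul_le_mul_left _ (Nat.pow_le_pow_left (Nat.sub_le Q 1) _)
  calc (Q-1)^d' * Q^(s-d') ≤ ((Q-1)^d * Q^(d'-d)) * Q^(s-d') := Nat.mul_le_mul_right _ h1
  _ = (Q-1)^d * Q^(s-d) := by rw [mul_assoc, ← pow_add]; congr 2; omega

lemma aux2 (Q n d : ℕ) (hd : d ≤ n+1) :
    (Q-1)^d * Q^(n+1-d) ≤ Q * ((Q-1)^(min d n) * Q^(n - min d n)) := by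
  rcases le_or_gt d n with h | h
  · rw [min_eq_left h]
    calc (Q-1)^d * Q^(n+1-d) = (Q-1)^d * (Q^(n-d) * Q) := by
          rw [← pow_succ]; congr 2; omega
    _ = Q * ((Q-1)^d * Q^(n-d)) := by ring
    _ ≤ Q * ((Q-1)^d * Q^(n-d)) := le_rfl
  · have hd' : d = n+1 := by omega
    subst hd'
    rw [min_eq_right (by omega : n ≤ n+1)]
    simp only [Nat.sub_self, pow_zero, mul_one]
    rw [pow_succ]
    calc (Q-1)^n * (Q-1) ≤ (Q-1)^n * Q := Nat.mul_le_mul_left _ (Nat.sub_le Q 1)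
    _ = Q * (Q-1)^n := mul_comm _ _

theorem wtLowLe : ∀ (s : ℕ) (d : ℕ) (c : (Fin s → Bool) → K), d ≤ s → c ≠ 0 →
    (∀ a, c a ≠ 0 → bsize a ≤ d) →
    (Fintype.card Kˣ - 1)^d * (Fintype.card Kˣ)^(s-d) ≤ wt c := by
  intro s
  induction s with
  | zero =>
    intro d c hd hc _
    have hd0 : d = 0 := by omega
    subst hd0
    simpa using wt_pos_zero hc
  | succ n ih =>
    intro d c hd hc hsupp
    set Q := Fintype.card Kˣ with hQ
    set c0 : (Fin n → Bool) → K := fun a => c (Fin.cons false a) with hc0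
    set c1 : (Fin n → Bool) → K := fun a => c (Fin.cons true a) with hc1
    have hwt : wt c = ∑ u : Kˣ, wt (fun a => c0 a + (u:K) * c1 a) := wt_cons c
    set d' := min d n with hd'
    have key0 : ∀ u : Kˣ, (fun a => c0 a + (u:K)*c1 a) ≠ (0 : (Fin n → Bool) → K) →
        (Q-1)^d' * Q^(n-d') ≤ wt (fun a => c0 a + (u:K)*c1 a) := by
      intro u hne
      apply ih d' _ (by omega) hne
      intro a ha
      have hsz : bsize a ≤ d := by
        rcases (show c0 a ≠ 0 ∨ c1 a ≠ 0 by
          by_contra hcc; push_neg at hcc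
          exact ha (by simp [hcc.1, hcc.2])) with h | h
        · have := hsupp (Fin.cons false a) h
          rw [bsize_cons] at this
          simpa using this
        · have := hsupp (Fin.cons true a) h
          rw [bsize_cons] at this
          simp at this
          omega
      exact le_min hsz (bsize_le a)
    by_cases h1 : c1 = (0 : (Fin n → Bool) → K)
    · have hc0ne : c0 ≠ 0 := by
        intro h0
        apply hc
        funext a
        rw [Pi.zero_apply]
        conv_lhs => rw [← Fin.cons_self_tail a]
        cases ha0 : a 0 with
        | false => simpa using congrFun h0 (Fin.tail a)
        | true => simpa using congrFun h1 (Fin.tail a)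
      have heq : ∀ u : Kˣ, (fun a => c0 a + (u:K) * c1 a) = c0 := by
        intro u; funext a; rw [congrFun h1 a]; simp
      have : wt c = Q * wt c0 := by
        rw [hwt]
        rw [Finset.sum_congr rfl (fun u _ => by rw [heq u])]
        rw [Finset.sum_const, Finset.card_univ]
        simp [hQ]
      rw [this]
      have hk := key0 1 (by rw [heq 1]; exact hc0ne)
      rw [heq 1] at hk
      calc (Q-1)^d * Q^(n+1-d) ≤ Q * ((Q-1)^d' * Q^(n-d')) := aux2 Q n d hd
      _ ≤ Q * wt c0 := Nat.mul_le_mul_left _ hk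
    · by_cases h2 : ∃ u₀ : Kˣ, ∀ a, c0 a + (u₀:K) * c1 a = 0
      · obtain ⟨u₀, hu₀⟩ := h2
        have hform : ∀ u : Kˣ, (fun a => c0 a + (u:K)*c1 a) = fun a => ((u:K) - (u₀:K)) * c1 a := by
          intro u; funext a
          linear_combination hu₀ a
        have hwtu : ∀ u : Kˣ, u ≠ u₀ → wt (fun a => c0 a + (u:K)*c1 a) = wt c1 := by
          intro u hu
          rw [hform u]
          exact wt_smul _ _ (sub_ne_zero.mpr (fun h => hu (Units.ext h)))
        obtain ⟨a₁, ha₁⟩ := ne_zero_iff_exists.mp h1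
        have hd1 : 1 ≤ d := by
          have := hsupp (Fin.cons true a₁) ha₁
          rw [bsize_cons] at this
          simp at this
          omega
        have hc1b : (Q-1)^(d-1) * Q^(n-(d-1)) ≤ wt c1 := by
          apply ih (d-1) c1 (by omega) (ne_zero_iff_exists.mpr ⟨a₁, ha₁⟩)
          intro a ha
          have := hsupp (Fin.cons true a) ha
          rw [bsize_cons] at this
          simp at this
          omega
        have hsum : (Q-1) * wt c1 ≤ wt c := by
          rw [hwt]
          calc (Q-1) * wt c1 = ∑ _u ∈ Finset.univ.erase u₀, wt c1 := by
                rw [Finset.sum_const, Finset.card_erase_of_mem (Finset.mem_univ _), Finset.card_univ]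
                simp [hQ]
          _ = ∑ u ∈ Finset.univ.erase u₀, wt (fun a => c0 a + (u:K) * c1 a) := by
                apply Finset.sum_congr rfl
                intro u hu
                rw [hwtu u (Finset.ne_of_mem_erase hu)]
          _ ≤ ∑ u : Kˣ, wt (fun a => c0 a + (u:K) * c1 a) :=
                Finset.sum_le_sum_of_subset (Finset.erase_subset _ _)
        calc (Q-1)^d * Q^(n+1-d) = (Q-1) * ((Q-1)^(d-1) * Q^(n-(d-1))) := by
              rw [← mul_assoc, ← pow_succ']
              congr 2
              · omega
              · omega
        _ ≤ (Q-1) * wt c1 := Nat.mul_le_mul_left _ hc1b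
        _ ≤ wt c := hsum
      · push_neg at h2
        have hsum : Q * ((Q-1)^d' * Q^(n-d')) ≤ wt c := by
          rw [hwt]
          have := Finset.card_nsmul_le_sum Finset.univ
            (fun u : Kˣ => wt (fun a => c0 a + (u:K) * c1 a)) ((Q-1)^d' * Q^(n-d'))
            (fun u _ => key0 u (by
              obtain ⟨a, ha⟩ := h2 u
              exact ne_zero_iff_exists.mpr ⟨a, ha⟩))
          simpa [Finset.card_univ, hQ, smul_eq_mul] using this
        calc (Q-1)^d * Q^(n+1-d) ≤ Q * ((Q-1)^d' * Q^(n-d')) := aux2 Q n d hd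
        _ ≤ wt c := hsum


lemma c_parts (c : (Fin (n+1) → Bool) → K) {n : ℕ} : True := trivial

lemma c_eq_zero_of_parts {n : ℕ} {c : (Fin (n+1) → Bool) → K}
    (h0 : (fun a => c (Fin.cons false a)) = (0 : (Fin n → Bool) → K))
    (h1 : (fun a => c (Fin.cons true a)) = (0 : (Fin n → Bool) → K)) : c = 0 := by
  funext a
  rw [Pi.zero_apply]
  conv_lhs => rw [← Fin.cons_self_tail a]
  cases ha0 : a 0 with
  | false => simpa using congrFun h0 (Fin.tail a)
  | true => simpa using congrFun h1 (Fin.tail a)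

theorem wtHighLe : ∀ (s : ℕ) (d : ℕ) (c : (Fin s → Bool) → K), d ≤ s → c ≠ 0 →
    (∀ a, c a ≠ 0 → d ≤ bsize a) →
    (Fintype.card Kˣ - 1)^(s-d) * (Fintype.card Kˣ)^d ≤ wt c := by
  intro s
  induction s with
  | zero =>
    intro d c hd hc _
    have hd0 : d = 0 := by omega
    subst hd0
    simpa using wt_pos_zero hc
  | succ n ih =>
    intro d c hd hc hsupp
    set Q := Fintype.card Kˣ with hQ
    rcases Nat.eq_zero_or_pos d with hd0 | hd1
    · subst hd0
      have := wtLowLe (n+1) (n+1) c le_rfl hc (fun a _ => bsize_le a)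
      rw [Nat.sub_self] at this
      rw [Nat.sub_zero]
      simpa using this
    set c0 : (Fin n → Bool) → K := fun a => c (Fin.cons false a) with hc0
    set c1 : (Fin n → Bool) → K := fun a => c (Fin.cons true a) with hc1
    have hwt : wt c = ∑ u : Kˣ, wt (fun a => c0 a + (u:K) * c1 a) := wt_cons c
    by_cases h1 : c1 = (0 : (Fin n → Bool) → K)
    · have hc0ne : c0 ≠ 0 := fun h0 => hc (c_eq_zero_of_parts h0 h1)
      obtain ⟨a₀, ha₀⟩ := ne_zero_iff_exists.mp hc0ne
      have hdn : d ≤ n := by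
        have h1' := hsupp (Fin.cons false a₀) ha₀
        rw [bsize_cons] at h1'
        have := bsize_le a₀
        simp at h1'
        omega
      have hb : (Q-1)^(n-d) * Q^d ≤ wt c0 := by
        apply ih d c0 hdn hc0ne
        intro a ha
        have := hsupp (Fin.cons false a) ha
        rw [bsize_cons] at this
        simpa using this
      have heq : ∀ u : Kˣ, (fun a => c0 a + (u:K) * c1 a) = c0 := by
        intro u; funext a; rw [congrFun h1 a]; simp
      have hwtQ : wt c = Q * wt c0 := by
        rw [hwt, Finset.sum_congr rfl (fun u _ => by rw [heq u]), Finset.sum_const,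
          Finset.card_univ]
        simp [hQ]
      rw [hwtQ]
      calc (Q-1)^(n+1-d) * Q^d = (Q-1) * ((Q-1)^(n-d) * Q^d) := by
            rw [← mul_assoc, ← pow_succ']
            congr 2
            omega
      _ ≤ Q * ((Q-1)^(n-d) * Q^d) := Nat.mul_le_mul_right _ (Nat.sub_le Q 1)
      _ ≤ Q * wt c0 := Nat.mul_le_mul_left _ hb
    · by_cases h2 : ∃ u₀ : Kˣ, ∀ a, c0 a + (u₀:K) * c1 a = 0
      · obtain ⟨u₀, hu₀⟩ := h2
        have hc1supp : ∀ a, c1 a ≠ 0 → d ≤ bsize a := by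
          intro a ha
          have hc0a : c0 a ≠ 0 := by
            intro h
            have h' := hu₀ a
            rw [h, zero_add, mul_eq_zero] at h'
            rcases h' with h' | h'
            · exact Units.ne_zero u₀ h'
            · exact ha h'
          have := hsupp (Fin.cons false a) hc0a
          rw [bsize_cons] at this
          simpa using this
        obtain ⟨a₁, ha₁⟩ := ne_zero_iff_exists.mp h1
        have hdn : d ≤ n := le_trans (hc1supp a₁ ha₁) (bsize_le a₁)
        have hb : (Q-1)^(n-d) * Q^d ≤ wt c1 := ih d c1 hdn h1 hc1supp
        have hform : ∀ u : Kˣ, (fun a => c0 a + (u:K)*c1 a) = fun a => ((u:K) - (u₀:K)) * c1 a := by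
          intro u; funext a
          linear_combination hu₀ a
        have hwtu : ∀ u : Kˣ, u ≠ u₀ → wt (fun a => c0 a + (u:K)*c1 a) = wt c1 := by
          intro u hu
          rw [hform u]
          exact wt_smul _ _ (sub_ne_zero.mpr (fun h => hu (Units.ext h)))
        have hsum : (Q-1) * wt c1 ≤ wt c := by
          rw [hwt]
          calc (Q-1) * wt c1 = ∑ _u ∈ Finset.univ.erase u₀, wt c1 := by
                rw [Finset.sum_const, Finset.card_erase_of_mem (Finset.mem_univ _),
                  Finset.card_univ]
                simp [hQ]
          _ = ∑ u ∈ Finset.univ.erase u₀, wt (fun a => c0 a + (u:K) * c1 a) := by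
                apply Finset.sum_congr rfl
                intro u hu
                rw [hwtu u (Finset.ne_of_mem_erase hu)]
          _ ≤ ∑ u : Kˣ, wt (fun a => c0 a + (u:K) * c1 a) :=
                Finset.sum_le_sum_of_subset (Finset.erase_subset _ _)
        calc (Q-1)^(n+1-d) * Q^d = (Q-1) * ((Q-1)^(n-d) * Q^d) := by
              rw [← mul_assoc, ← pow_succ']
              congr 2
              omega
        _ ≤ (Q-1) * wt c1 := Nat.mul_le_mul_left _ hb
        _ ≤ wt c := hsum
      · push_neg at h2
        have key : ∀ u : Kˣ, (Q-1)^(n-(d-1)) * Q^(d-1) ≤ wt (fun a => c0 a + (u:K) * c1 a) := by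
          intro u
          apply ih (d-1) _ (by omega)
          · obtain ⟨a, ha⟩ := h2 u
            exact ne_zero_iff_exists.mpr ⟨a, ha⟩
          · intro a ha
            rcases (show c0 a ≠ 0 ∨ c1 a ≠ 0 by
              by_contra hcc; push_neg at hcc
              exact ha (by simp [hcc.1, hcc.2])) with h | h
            · have := hsupp (Fin.cons false a) h
              rw [bsize_cons] at this
              simp at this
              omega
            · have := hsupp (Fin.cons true a) h
              rw [bsize_cons] at this
              simp at this
              omega
        have hsum : Q * ((Q-1)^(n-(d-1)) * Q^(d-1)) ≤ wt c := by
          rw [hwt]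
          have := Finset.card_nsmul_le_sum Finset.univ
            (fun u : Kˣ => wt (fun a => c0 a + (u:K) * c1 a)) ((Q-1)^(n-(d-1)) * Q^(d-1))
            (fun u _ => key u)
          simpa [Finset.card_univ, hQ, smul_eq_mul] using this
        obtain ⟨e, rfl⟩ : ∃ e, d = e + 1 := ⟨d-1, by omega⟩
        calc (Q-1)^(n+1-(e+1)) * Q^(e+1) = Q * ((Q-1)^(n-(e+1-1)) * Q^(e+1-1)) := by
              rw [show n+1-(e+1) = n-(e+1-1) from by omega, show e+1-1 = e from rfl, pow_succ]
              ring
        _ ≤ wt c := hsum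

end Lower

section Count2


/-- condition: for each `i < e`, coordinates `p+2i` and `p+2i+1` differ -/
def pcond {α : Type*} (n p e : ℕ) (x : Fin n → α) : Prop :=
  ∀ i : ℕ, i < e → ∀ (h : p + 2*i + 1 < n),
    x ⟨p + 2*i, Nat.lt_of_succ_lt h⟩ ≠ x ⟨p + 2*i + 1, h⟩

lemma pcond_zero {α : Type*} {n p : ℕ} (x : Fin n → α) : pcond n p 0 x := by
  intro i hi
  omega

lemma pcond_succ_iff {α : Type*} {n p e : ℕ} (u : α) (y : Fin n → α) :
    pcond (n+1) (p+1) e (Fin.cons u y) ↔ pcond n p e y := by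
  constructor
  · intro h i hi hlt
    have hlt' : (p+1) + 2*i + 1 < n+1 := by omega
    have H := h i hi hlt'
    have e1 : (⟨p+1+2*i, Nat.lt_of_succ_lt hlt'⟩ : Fin (n+1))
        = Fin.succ ⟨p+2*i, Nat.lt_of_succ_lt hlt⟩ := by
      apply Fin.ext
      simp
      omega
    have e2 : (⟨p+1+2*i+1, hlt'⟩ : Fin (n+1)) = Fin.succ ⟨p+2*i+1, hlt⟩ := by
      apply Fin.ext
      simp
      omega
    rw [e1, e2, Fin.cons_succ, Fin.cons_succ] at H
    exact H
  · intro h i hi hlt'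
    have hlt : p + 2*i + 1 < n := by omega
    have H := h i hi hlt
    have e1 : (⟨p+1+2*i, Nat.lt_of_succ_lt hlt'⟩ : Fin (n+1))
        = Fin.succ ⟨p+2*i, Nat.lt_of_succ_lt hlt⟩ := by
      apply Fin.ext
      simp
      omega
    have e2 : (⟨p+1+2*i+1, hlt'⟩ : Fin (n+1)) = Fin.succ ⟨p+2*i+1, hlt⟩ := by
      apply Fin.ext
      simp
      omega
    rw [e1, e2, Fin.cons_succ, Fin.cons_succ]
    exact H

lemma pcond_zero_succ_iff {α : Type*} {n e : ℕ} (u v : α) (y : Fin n → α) :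
    pcond (n+2) 0 (e+1) (Fin.cons u (Fin.cons v y)) ↔ (u ≠ v ∧ pcond n 0 e y) := by
  constructor
  · intro h
    constructor
    · have hlt : 0 + 2*0 + 1 < n+2 := by omega
      have H := h 0 (by omega) hlt
      have e1 : (⟨0+2*0, Nat.lt_of_succ_lt hlt⟩ : Fin (n+2)) = 0 := by
        apply Fin.ext
        simp
      have e2 : (⟨0+2*0+1, hlt⟩ : Fin (n+2)) = Fin.succ 0 := by
        apply Fin.ext
        simp
      rw [e1, e2, Fin.cons_zero, Fin.cons_succ, Fin.cons_zero] at H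
      exact H
    · intro i hi hlt
      have hlt' : 0 + 2*(i+1) + 1 < n+2 := by omega
      have H := h (i+1) (by omega) hlt'
      have e1 : (⟨0+2*(i+1), Nat.lt_of_succ_lt hlt'⟩ : Fin (n+2))
          = Fin.succ (Fin.succ ⟨0+2*i, Nat.lt_of_succ_lt hlt⟩) := by
        apply Fin.ext
        simp
        omega
      have e2 : (⟨0+2*(i+1)+1, hlt'⟩ : Fin (n+2))
          = Fin.succ (Fin.succ ⟨0+2*i+1, hlt⟩) := by
        apply Fin.ext
        simp
        omega
      rw [e1, e2, Fin.cons_succ, Fin.cons_succ, Fin.cons_succ, Fin.cons_succ] at H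
      exact H
  · rintro ⟨huv, h⟩ i hi hlt'
    cases i with
    | zero =>
      have e1 : (⟨0+2*0, Nat.lt_of_succ_lt hlt'⟩ : Fin (n+2)) = 0 := by
        apply Fin.ext
        simp
      have e2 : (⟨0+2*0+1, hlt'⟩ : Fin (n+2)) = Fin.succ 0 := by
        apply Fin.ext
        simp
      rw [e1, e2, Fin.cons_zero, Fin.cons_succ, Fin.cons_zero]
      exact huv
    | succ i =>
      have hlt : 0 + 2*i + 1 < n := by omega
      have H := h i (by omega) hlt
      have e1 : (⟨0+2*(i+1), Nat.lt_of_succ_lt hlt'⟩ : Fin (n+2))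
          = Fin.succ (Fin.succ ⟨0+2*i, Nat.lt_of_succ_lt hlt⟩) := by
        apply Fin.ext
        simp
        omega
      have e2 : (⟨0+2*(i+1)+1, hlt'⟩ : Fin (n+2))
          = Fin.succ (Fin.succ ⟨0+2*i+1, hlt⟩) := by
        apply Fin.ext
        simp
        omega
      rw [e1, e2, Fin.cons_succ, Fin.cons_succ, Fin.cons_succ, Fin.cons_succ]
      exact H


lemma pcond_e_succ {α : Type*} {n r e : ℕ} (x : Fin n → α) (h1 : r + 2*e + 1 < n) :
    pcond n r (e+1) x ↔
      (pcond n r e x ∧ x ⟨r+2*e, Nat.lt_of_succ_lt h1⟩ ≠ x ⟨r+2*e+1, h1⟩) := by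
  constructor
  · intro H
    exact ⟨fun i hi h' => H i (by omega) h', H e (by omega) h1⟩
  · rintro ⟨H1, H2⟩ i hi h'
    rcases Nat.lt_or_ge i e with hie | hie
    · exact H1 i hie h'
    · have : i = e := by omega
      subst this
      exact H2

section Cnt
variable {K : Type*} [Field K] [Fintype K] [DecidableEq K]

theorem cnt : ∀ (e p n : ℕ), p + 2*e ≤ n →
    ({x : Fin n → Kˣ | pcond n p e x}).ncard
      = (Fintype.card Kˣ * (Fintype.card Kˣ - 1))^e * (Fintype.card Kˣ)^(n - 2*e) := by
  intro e
  induction e with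
  | zero =>
    intro p n _
    have : {x : Fin n → Kˣ | pcond n p 0 x} = Set.univ :=
      Set.eq_univ_of_forall (fun x => pcond_zero x)
    rw [this, Set.ncard_univ, Nat.card_eq_fintype_card, Fintype.card_fun]
    simp
  | succ e ihe =>
    intro p
    induction p with
    | zero =>
      intro n h
      obtain ⟨m, rfl⟩ : ∃ m, n = m + 2 := ⟨n - 2, by omega⟩
      set Q := Fintype.card Kˣ with hQ
      rw [ncard_cons (pcond (m+2) 0 (e+1))]
      have hterm : ∀ u : Kˣ,
          (∑ v : Kˣ, {z : Fin m → Kˣ | pcond (m+2) 0 (e+1) (Fin.cons u (Fin.cons v z))}.ncard)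
            = (Q - 1) * ((Q * (Q-1))^e * Q^(m - 2*e)) := by
        intro u
        have hset : ∀ v : Kˣ, {z : Fin m → Kˣ | pcond (m+2) 0 (e+1) (Fin.cons u (Fin.cons v z))}
            = if u = v then (∅ : Set (Fin m → Kˣ)) else {z : Fin m → Kˣ | pcond m 0 e z} := by
          intro v
          rcases eq_or_ne u v with huv | huv
          · rw [if_pos huv]
            ext z
            simp only [Set.mem_setOf_eq, pcond_zero_succ_iff u v z]
            simp [huv]
          · rw [if_neg huv]
            ext z
            simp only [Set.mem_setOf_eq, pcond_zero_succ_iff u v z]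
            simp [huv]
        calc (∑ v : Kˣ, {z : Fin m → Kˣ | pcond (m+2) 0 (e+1) (Fin.cons u (Fin.cons v z))}.ncard)
            = ∑ v : Kˣ, (if u = v then (0:ℕ) else (Q * (Q-1))^e * Q^(m - 2*e)) := by
              apply Finset.sum_congr rfl
              intro v _
              rw [hset v]
              rcases eq_or_ne u v with huv | huv
              · simp [huv]
              · rw [if_neg huv, if_neg huv]
                exact ihe 0 m (by omega)
        _ = (Q - 1) * ((Q * (Q-1))^e * Q^(m - 2*e)) := by
              rw [← Finset.add_sum_erase Finset.univ _ (Finset.mem_univ u), if_pos rfl, zero_add,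
                Finset.sum_congr rfl
                  (fun v hv => if_neg (fun hh => (Finset.ne_of_mem_erase hv) hh.symm)),
                Finset.sum_const, Finset.card_erase_of_mem (Finset.mem_univ _),
                Finset.card_univ, smul_eq_mul]
      calc (∑ u : Kˣ, {y : Fin (m+1) → Kˣ | pcond (m+2) 0 (e+1) (Fin.cons u y)}.ncard)
          = ∑ u : Kˣ, (Q - 1) * ((Q * (Q-1))^e * Q^(m - 2*e)) := by
            apply Finset.sum_congr rfl
            intro u _
            rw [ncard_cons (fun y => pcond (m+2) 0 (e+1) (Fin.cons u y))]
            exact hterm u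
      _ = Q * ((Q - 1) * ((Q * (Q-1))^e * Q^(m - 2*e))) := by
            rw [Finset.sum_const, Finset.card_univ, smul_eq_mul]
      _ = (Q * (Q-1))^(e+1) * Q^(m+2 - 2*(e+1)) := by
            rw [show m+2 - 2*(e+1) = m - 2*e from by omega, pow_succ]
            ring
    | succ p ihp =>
      intro n h
      obtain ⟨m, rfl⟩ : ∃ m, n = m + 1 := ⟨n - 1, by omega⟩
      rw [ncard_cons (pcond (m+1) (p+1) (e+1))]
      have hterm : ∀ u : Kˣ, {y : Fin m → Kˣ | pcond (m+1) (p+1) (e+1) (Fin.cons u y)}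
          = {y : Fin m → Kˣ | pcond m p (e+1) y} := by
        intro u
        ext y
        simp only [Set.mem_setOf_eq]
        exact pcond_succ_iff u y
      calc (∑ u : Kˣ, {y : Fin m → Kˣ | pcond (m+1) (p+1) (e+1) (Fin.cons u y)}.ncard)
          = ∑ _u : Kˣ, (Fintype.card Kˣ * (Fintype.card Kˣ - 1))^(e+1)
              * (Fintype.card Kˣ)^(m - 2*(e+1)) := by
            apply Finset.sum_congr rfl
            intro u _
            rw [hterm u]
            exact ihp m (by omega)
      _ = (Fintype.card Kˣ * (Fintype.card Kˣ - 1))^(e+1)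
            * (Fintype.card Kˣ)^(m+1 - 2*(e+1)) := by
            rw [Finset.sum_const, Finset.card_univ, smul_eq_mul,
              show m+1 - 2*(e+1) = (m - 2*(e+1)) + 1 from by omega, pow_succ]
            ring

end Cnt


section Bridge
variable {K : Type*} [Field K] {s : ℕ}

noncomputable def expOf {s : ℕ} (a : Fin s → Bool) : Fin s →₀ ℕ :=
  Finsupp.equivFunOnFinite.symm (fun i => bif a i then 1 else 0)

lemma expOf_apply {a : Fin s → Bool} {i : Fin s} : expOf a i = bif a i then 1 else 0 :=
  rfl

lemma expOf_injective : Function.Injective (expOf (s := s)) := by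
  intro a b h
  funext i
  have h2 : expOf a i = expOf b i := by rw [h]
  rw [expOf_apply, expOf_apply] at h2
  cases ha : a i <;> cases hb : b i <;> simp [ha, hb] at h2 ⊢

lemma degree_eq_sum_univ (v : Fin s →₀ ℕ) : v.degree = ∑ i, v i := by
  unfold Finsupp.degree
  exact Finset.sum_subset (Finset.subset_univ _)
    (fun i _ hi => Finsupp.notMem_support_iff.mp hi)

lemma degree_expOf (a : Fin s → Bool) : (expOf a).degree = bsize a := by
  rw [degree_eq_sum_univ]
  unfold bsize
  exact Finset.sum_congr rfl (fun i _ => expOf_apply)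

lemma expOf_le_one (a : Fin s → Bool) (i : Fin s) : expOf a i ≤ 1 := by
  rw [expOf_apply]
  cases a i <;> simp

lemma sqfree_eq_expOf {e : Fin s →₀ ℕ} (he : ∀ i, e i ≤ 1) :
    e = expOf (fun i => decide (e i = 1)) := by
  ext i
  rw [expOf_apply]
  have := he i
  interval_cases h : e i <;> simp

lemma mem_span_sqfree_iff {f : MvPolynomial (Fin s) K} {d : ℕ} :
    f ∈ Submodule.span K (sqfreeMonomials K s d) ↔
      ∀ e ∈ f.support, (∀ i, e i ≤ 1) ∧ e.degree = d := by
  classical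
  constructor
  · intro hf
    let M : Submodule K (MvPolynomial (Fin s) K) :=
      { carrier := {g | ∀ e ∈ g.support, (∀ i, e i ≤ 1) ∧ e.degree = d}
        zero_mem' := by simp
        add_mem' := by
          intro a b ha hb e he
          rcases Finset.mem_union.mp (MvPolynomial.support_add he) with h | h
          · exact ha e h
          · exact hb e h
        smul_mem' := by
          intro c g hg e he
          exact hg e (MvPolynomial.support_smul he) }
    have hle : Submodule.span K (sqfreeMonomials K s d) ≤ M := by
      rw [Submodule.span_le]
      rintro g ⟨a, ha1, ha2, rfl⟩
      intro e he
      rw [MvPolynomial.support_monomial, if_neg (one_ne_zero)] at he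
      rw [Finset.mem_singleton.mp he]
      exact ⟨ha1, ha2⟩
    exact hle hf
  · intro h
    have hf : f = ∑ v ∈ f.support, monomial v (coeff v f) := f.as_sum
    rw [hf]
    apply Submodule.sum_mem
    intro v hv
    have : (monomial v) (coeff v f) = (coeff v f) • (monomial v) (1:K) := by
      rw [MvPolynomial.smul_monomial, smul_eq_mul, mul_one]
    rw [this]
    exact Submodule.smul_mem _ _
      (Submodule.subset_span ⟨v, (h v hv).1, (h v hv).2, rfl⟩)

lemma eval_eq_Vv {f : MvPolynomial (Fin s) K} (hf : ∀ e ∈ f.support, ∀ i, e i ≤ 1)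
    (x : Fin s → Kˣ) :
    eval (fun i => (x i : K)) f = Vv (fun a => f.coeff (expOf a)) x := by
  classical
  rw [MvPolynomial.eval_eq']
  have hsub : f.support ⊆ Finset.univ.image (expOf (s := s)) := fun e he =>
    Finset.mem_image.mpr ⟨fun i => decide (e i = 1), Finset.mem_univ _,
      (sqfree_eq_expOf (hf e he)).symm⟩
  rw [Finset.sum_subset hsub
    (fun e _ he => by rw [MvPolynomial.notMem_support_iff.mp he, zero_mul])]
  rw [Finset.sum_image (fun a _ b _ h => expOf_injective h)]
  unfold Vv
  apply Finset.sum_congr rfl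
  intro a _
  congr 1
  apply Finset.prod_congr rfl
  intro i _
  rw [expOf_apply]
  cases a i <;> simp

variable [Fintype K]

lemma mem_torus {x : Fin s → K} : x ∈ torus K s ↔ ∀ i, x i ≠ 0 := by
  classical
  unfold torus
  simp

noncomputable def torusEquiv (K : Type*) [Field K] [Fintype K] (s : ℕ) :
    (Fin s → Kˣ) ≃ {p // p ∈ torus K s} where
  toFun x := ⟨fun i => (x i : K), mem_torus.mpr (fun i => Units.ne_zero _)⟩
  invFun p := fun i => Units.mk0 (p.1 i) (mem_torus.mp p.2 i)
  left_inv x := funext fun i => Units.ext (by simp)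
  right_inv p := Subtype.ext (funext fun i => by simp)

lemma ncard_transfer {v : {p // p ∈ torus K s} → K} {W : (Fin s → Kˣ) → K}
    (h : ∀ x, v (torusEquiv K s x) = W x) :
    {p | v p ≠ 0}.ncard = {x | W x ≠ 0}.ncard := by
  rw [← Nat.card_coe_set_eq, ← Nat.card_coe_set_eq]
  exact (Nat.card_congr (Equiv.subtypeEquiv (torusEquiv K s)
    (fun x => by rw [Set.mem_setOf_eq, Set.mem_setOf_eq, h x]))).symm

end Bridge

section Up
variable {K : Type*} [Field K] {s : ℕ}

lemma degree_add (v w : Fin s →₀ ℕ) : (v + w).degree = v.degree + w.degree := by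
  rw [degree_eq_sum_univ, degree_eq_sum_univ, degree_eq_sum_univ, ← Finset.sum_add_distrib]
  rfl

lemma degree_single (j : Fin s) : (Finsupp.single j (1:ℕ)).degree = 1 := by
  classical
  rw [degree_eq_sum_univ, Finset.sum_eq_single j (fun i _ hij => Finsupp.single_eq_of_ne (by tauto))
    (fun h => absurd (Finset.mem_univ j) h)]
  simp

lemma support_X_sub_X {j k : Fin s} (hjk : j ≠ k) :
    (X j - X k : MvPolynomial (Fin s) K).support ⊆
      {Finsupp.single j 1, Finsupp.single k 1} := by
  classical
  have h1 : (X j - X k : MvPolynomial (Fin s) K)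
      = monomial (Finsupp.single j 1) (1:K) + monomial (Finsupp.single k 1) (-1:K) := by
    rw [sub_eq_add_neg, MvPolynomial.X, MvPolynomial.X, ← map_neg]
  rw [h1]
  intro v hv
  rcases Finset.mem_union.mp (MvPolynomial.support_add hv) with h | h
  · rw [MvPolynomial.support_monomial, if_neg one_ne_zero] at h
    simp [Finset.mem_singleton.mp h]
  · rw [MvPolynomial.support_monomial, if_neg (by norm_num : (-1:K) ≠ 0)] at h
    simp [Finset.mem_singleton.mp h]

/-- products of distinct variables -/
lemma claimSingles : ∀ (r : ℕ), r ≤ s →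
    ∃ f : MvPolynomial (Fin s) K,
      (∀ v ∈ f.support, (∀ i, v i ≤ 1) ∧ v.degree = r ∧ (∀ i : Fin s, r ≤ i.val → v i = 0)) ∧
      (∀ x : Fin s → Kˣ, eval (fun i => (x i : K)) f ≠ 0) := by
  intro r
  induction r with
  | zero =>
    intro _
    refine ⟨1, ?_, ?_⟩
    · intro v hv
      classical
      rw [show (1 : MvPolynomial (Fin s) K) = monomial 0 (1:K) from rfl,
        MvPolynomial.support_monomial, if_neg one_ne_zero] at hv
      rw [Finset.mem_singleton.mp hv]
      simp
    · intro x
      simp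
  | succ r ihr =>
    intro hr
    obtain ⟨f, hsupp, heval⟩ := ihr (by omega)
    classical
    set j : Fin s := ⟨r, by omega⟩ with hj
    refine ⟨f * X j, ?_, ?_⟩
    · intro v hv
      have := MvPolynomial.support_mul f (X j) hv
      rcases Finset.mem_add.mp this with ⟨b, hb, c, hc, rfl⟩
      rw [MvPolynomial.support_X, Finset.mem_singleton] at hc
      subst hc
      obtain ⟨hb1, hb2, hb3⟩ := hsupp b hb
      refine ⟨?_, ?_, ?_⟩
      · intro i
        rw [Finsupp.add_apply]
        by_cases hij : i = j
        · rw [hij, Finsupp.single_eq_same, hb3 j (by simp [hj])]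
        · rw [Finsupp.single_eq_of_ne hij]
          simpa using hb1 i
      · rw [degree_add, hb2, degree_single]
      · intro i hi
        rw [Finsupp.add_apply, hb3 i (by omega),
          Finsupp.single_eq_of_ne (by
            intro hh
            rw [hh] at hi
            simp [hj] at hi)]
        simp
    · intro x
      rw [map_mul, MvPolynomial.eval_X]
      exact mul_ne_zero (heval x) (Units.ne_zero (x j))

lemma claimUp : ∀ (e r : ℕ), r + 2*e ≤ s →
    ∃ f : MvPolynomial (Fin s) K,
      (∀ v ∈ f.support, (∀ i, v i ≤ 1) ∧ v.degree = e + r ∧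
        (∀ i : Fin s, r + 2*e ≤ i.val → v i = 0)) ∧
      (∀ x : Fin s → Kˣ, (eval (fun i => (x i : K)) f ≠ 0 ↔ pcond s r e x)) := by
  intro e
  induction e with
  | zero =>
    intro r hr
    have hrs : r ≤ s := by omega
    obtain ⟨f, hsupp, heval⟩ := claimSingles (K := K) r hrs
    refine ⟨f, ?_, ?_⟩
    · intro v hv
      obtain ⟨h1, h2, h3⟩ := hsupp v hv
      refine ⟨h1, by rw [Nat.zero_add]; exact h2, ?_⟩
      intro i hi
      exact h3 i (by omega)
    · intro x
      constructor
      · intro _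
        exact pcond_zero x
      · intro _
        exact heval x
  | succ e ihe =>
    intro r hr
    obtain ⟨f, hsupp, heval⟩ := ihe r (by omega)
    classical
    set j : Fin s := ⟨r + 2*e, by omega⟩ with hj
    set k : Fin s := ⟨r + 2*e + 1, by omega⟩ with hk
    have hjk : j ≠ k := by
      intro h
      have := congrArg Fin.val h
      simp [hj, hk] at this
    refine ⟨f * (X j - X k), ?_, ?_⟩
    · intro v hv
      have := MvPolynomial.support_mul f (X j - X k) hv
      rcases Finset.mem_add.mp this with ⟨b, hb, c, hc, rfl⟩
      obtain ⟨hb1, hb2, hb3⟩ := hsupp b hb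
      have hc' := support_X_sub_X (K := K) hjk hc
      have hbj : b j = 0 := hb3 j (by simp [hj])
      have hbk : b k = 0 := hb3 k (by simp [hk])
      rcases Finset.mem_insert.mp hc' with rfl | hc''
      · refine ⟨?_, ?_, ?_⟩
        · intro i
          rw [Finsupp.add_apply]
          by_cases hij : i = j
          · rw [hij, Finsupp.single_eq_same, hbj]
          · rw [Finsupp.single_eq_of_ne hij]
            simpa using hb1 i
        · rw [degree_add, hb2, degree_single]
          omega
        · intro i hi
          have hb0 : b i = 0 := hb3 i (by omega)
          have hs0 : (Finsupp.single j (1:ℕ)) i = 0 :=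
            Finsupp.single_eq_of_ne (by
              intro hh
              have hiv : (i : ℕ) = r + 2*e := by rw [hh]
              omega)
          rw [Finsupp.add_apply, hb0, hs0]
      · rw [Finset.mem_singleton.mp hc'']
        refine ⟨?_, ?_, ?_⟩
        · intro i
          rw [Finsupp.add_apply]
          by_cases hik : i = k
          · rw [hik, Finsupp.single_eq_same, hbk]
          · rw [Finsupp.single_eq_of_ne hik]
            simpa using hb1 i
        · rw [degree_add, hb2, degree_single]
          omega
        · intro i hi
          have hb0 : b i = 0 := hb3 i (by omega)
          have hs0 : (Finsupp.single k (1:ℕ)) i = 0 :=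
            Finsupp.single_eq_of_ne (by
              intro hh
              have hiv : (i : ℕ) = r + 2*e + 1 := by rw [hh]
              omega)
          rw [Finsupp.add_apply, hb0, hs0]
    · intro x
      rw [map_mul, map_sub, MvPolynomial.eval_X, MvPolynomial.eval_X, mul_ne_zero_iff]
      rw [heval x]
      have h1 : r + 2*e + 1 < s := by omega
      rw [pcond_e_succ x h1]
      have : ((x j : K) - (x k : K) ≠ 0) ↔ x j ≠ x k := by
        rw [sub_ne_zero]
        constructor
        · intro h hh
          exact h (by rw [hh])
        · intro h hh
          exact h (Units.ext hh)
      rw [this]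

end Up


section MinDistHelper
variable {K : Type*} [Field K]

lemma minDist_eq_of {ι : Type*} (C : Submodule K (ι → K)) (N : ℕ)
    (hmem : ∃ v ∈ C, v ≠ 0 ∧ {i | v i ≠ 0}.ncard = N)
    (hlow : ∀ v ∈ C, v ≠ 0 → N ≤ {i | v i ≠ 0}.ncard) : minDist C = N := by
  unfold minDist
  apply le_antisymm
  · apply Nat.sInf_le
    obtain ⟨v, h1, h2, h3⟩ := hmem
    exact ⟨v, h1, h2, h3⟩
  · apply le_csInf
    · obtain ⟨v, h1, h2, h3⟩ := hmem
      exact ⟨N, v, h1, h2, h3⟩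
    · rintro n ⟨v, h1, h2, rfl⟩
      exact hlow v h1 h2

end MinDistHelper

/-- Theorem (minimum distance of the toric code over the `d`-th hypersimplex). -/
theorem minDist_toric_code_hypersimplex (K : Type*) [Field K] [Fintype K] (s d : ℕ)
    (hs : 2 ≤ s) (hd1 : 1 ≤ d) (hds : d ≤ s) :
    (3 ≤ Fintype.card K → 2 * d ≤ s →
      minDist ((Submodule.span K (sqfreeMonomials K s d)).map (evalMap (torus K s))) =
        (Fintype.card K - 2) ^ d * (Fintype.card K - 1) ^ (s - d)) ∧
    (3 ≤ Fintype.card K → s < 2 * d → d < s →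
      minDist ((Submodule.span K (sqfreeMonomials K s d)).map (evalMap (torus K s))) =
        (Fintype.card K - 2) ^ (s - d) * (Fintype.card K - 1) ^ d) ∧
    (d = s →
      minDist ((Submodule.span K (sqfreeMonomials K s d)).map (evalMap (torus K s))) =
        (Fintype.card K - 1) ^ s) ∧
    (Fintype.card K = 2 →
      minDist ((Submodule.span K (sqfreeMonomials K s d)).map (evalMap (torus K s))) = 1) := by
  letI : DecidableEq K := Classical.decEq K
  set Q := Fintype.card Kˣ with hQdef
  have hQ1 : Q = Fintype.card K - 1 := Fintype.card_units _
  have hKcard : 2 ≤ Fintype.card K := Fintype.one_lt_card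
  have hQpos : 1 ≤ Q := by omega
  set C := (Submodule.span K (sqfreeMonomials K s d)).map (evalMap (torus K s)) with hC
  -- common lower-bound extraction
  have hcommon : ∀ v, v ∈ C → v ≠ 0 →
      ∃ c : (Fin s → Bool) → K, c ≠ 0 ∧ (∀ a, c a ≠ 0 → bsize a = d) ∧
        {i | v i ≠ 0}.ncard = wt c := by
    intro v hv hv0
    obtain ⟨f, hf, rfl⟩ := Submodule.mem_map.mp hv
    set c : (Fin s → Bool) → K := fun a => f.coeff (expOf a) with hc
    have hfsupp := mem_span_sqfree_iff.mp hf
    have hVf : ∀ x : Fin s → Kˣ,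
        (evalMap (torus K s) f) (torusEquiv K s x) = Vv c x := by
      intro x
      exact eval_eq_Vv (fun e he => (hfsupp e he).1) x
    refine ⟨c, ?_, ?_, ?_⟩
    · intro hc0
      apply hv0
      funext p
      rw [Pi.zero_apply, show p = torusEquiv K s ((torusEquiv K s).symm p) from
        ((torusEquiv K s).apply_symm_apply p).symm, hVf, hc0]
      unfold Vv
      simp
    · intro a ha
      have hmem : expOf a ∈ f.support := MvPolynomial.mem_support_iff.mpr ha
      rw [← degree_expOf a]
      exact (hfsupp _ hmem).2
    · exact ncard_transfer hVf
  have hlowL : ∀ v ∈ C, v ≠ 0 → (Q-1)^d * Q^(s-d) ≤ {i | v i ≠ 0}.ncard := by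
    intro v hv hv0
    obtain ⟨c, hc0, hcs, hcard⟩ := hcommon v hv hv0
    rw [hcard]
    exact wtLowLe s d c hds hc0 (fun a ha => le_of_eq (hcs a ha))
  have hlowH : ∀ v ∈ C, v ≠ 0 → (Q-1)^(s-d) * Q^d ≤ {i | v i ≠ 0}.ncard := by
    intro v hv hv0
    obtain ⟨c, hc0, hcs, hcard⟩ := hcommon v hv hv0
    rw [hcard]
    exact wtHighLe s d c hds hc0 (fun a ha => ge_of_eq (hcs a ha))
  -- upper-bound codeword construction
  have hup : ∀ e r : ℕ, r + 2*e ≤ s → e + r = d → 0 < (Q*(Q-1))^e * Q^(s-2*e) →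
      ∃ v ∈ C, v ≠ 0 ∧ {i | v i ≠ 0}.ncard = (Q*(Q-1))^e * Q^(s - 2*e) := by
    intro e r hre hdeg hpos
    obtain ⟨f, hsupp, heval⟩ := claimUp (K := K) e r hre
    have hfmem : f ∈ Submodule.span K (sqfreeMonomials K s d) := by
      rw [mem_span_sqfree_iff]
      intro ee hee
      obtain ⟨h1, h2, _⟩ := hsupp ee hee
      exact ⟨h1, by rw [h2, hdeg]⟩
    set v := evalMap (torus K s) f with hvdef
    have hvC : v ∈ C := Submodule.mem_map_of_mem hfmem
    have hVf : ∀ x : Fin s → Kˣ,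
        v (torusEquiv K s x) = MvPolynomial.eval (fun i => ((x i : Kˣ) : K)) f :=
      fun x => rfl
    have hcard : {i | v i ≠ 0}.ncard = (Q*(Q-1))^e * Q^(s-2*e) := by
      rw [ncard_transfer hVf,
        show {x : Fin s → Kˣ | MvPolynomial.eval (fun i => ((x i : Kˣ) : K)) f ≠ 0}
          = {x : Fin s → Kˣ | pcond s r e x} from Set.ext (fun x => heval x)]
      exact cnt e r s (by omega)
    have hv0 : v ≠ 0 := by
      intro h0
      rw [h0, show {i | (0 : {x // x ∈ torus K s} → K) i ≠ 0} = (∅ : Set _) from by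
        ext i; simp, Set.ncard_empty] at hcard
      omega
    exact ⟨v, hvC, hv0, hcard⟩
  refine ⟨?_, ?_, ?_, ?_⟩
  · -- branch 1 : 2d ≤ s
    intro h3 h2d
    have hQ2 : 2 ≤ Q := by omega
    have hW : (Q*(Q-1))^d * Q^(s-2*d) = (Q-1)^d * Q^(s-d) := by
      rw [mul_pow, mul_comm (Q^d) ((Q-1)^d), mul_assoc, ← pow_add,
        show d + (s - 2*d) = s - d from by omega]
    have hpos : 0 < (Q*(Q-1))^d * Q^(s-2*d) := by
      rw [hW]
      exact Nat.mul_pos (pow_pos (by omega) _) (pow_pos (by omega) _)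
    obtain ⟨v, hvC, hv0, hcard⟩ := hup d 0 (by omega) (by omega) hpos
    rw [show Fintype.card K - 2 = Q - 1 from by omega,
      show Fintype.card K - 1 = Q from by omega]
    exact minDist_eq_of C _ ⟨v, hvC, hv0, by rw [hcard, hW]⟩ hlowL
  · -- branch 2 : s < 2d, d < s
    intro h3 h2d hdlt
    have hQ2 : 2 ≤ Q := by omega
    have hW : (Q*(Q-1))^(s-d) * Q^(s-2*(s-d)) = (Q-1)^(s-d) * Q^d := by
      rw [mul_pow, mul_comm (Q^(s-d)) ((Q-1)^(s-d)), mul_assoc, ← pow_add,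
        show (s-d) + (s - 2*(s-d)) = d from by omega]
    have hpos : 0 < (Q*(Q-1))^(s-d) * Q^(s-2*(s-d)) := by
      rw [hW]
      exact Nat.mul_pos (pow_pos (by omega) _) (pow_pos (by omega) _)
    obtain ⟨v, hvC, hv0, hcard⟩ := hup (s-d) (2*d-s) (by omega) (by omega) hpos
    rw [show Fintype.card K - 2 = Q - 1 from by omega,
      show Fintype.card K - 1 = Q from by omega]
    exact minDist_eq_of C _ ⟨v, hvC, hv0, by rw [hcard, hW]⟩ hlowH
  · -- branch 3 : d = s
    intro hdeq
    have hW : (Q*(Q-1))^0 * Q^(s-2*0) = Q^s := by simp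
    have hpos : 0 < (Q*(Q-1))^0 * Q^(s-2*0) := by
      rw [hW]
      exact pow_pos (by omega) _
    obtain ⟨v, hvC, hv0, hcard⟩ := hup 0 s (by omega) (by omega) hpos
    rw [show Fintype.card K - 1 = Q from by omega]
    refine minDist_eq_of C _ ⟨v, hvC, hv0, by rw [hcard, hW]⟩ ?_
    intro v' hv' hv0'
    have := hlowH v' hv' hv0'
    rwa [hdeq, Nat.sub_self, pow_zero, one_mul] at this
  · -- branch 4 : q = 2
    intro hq2
    have hQeq : Q = 1 := by omega
    have hW : (Q*(Q-1))^0 * Q^(s-2*0) = 1 := by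
      rw [hQeq]
      simp
    have hpos : 0 < (Q*(Q-1))^0 * Q^(s-2*0) := by rw [hW]; omega
    obtain ⟨v, hvC, hv0, hcard⟩ := hup 0 d (by omega) (by omega) hpos
    refine minDist_eq_of C _ ⟨v, hvC, hv0, by rw [hcard, hW]⟩ ?_
    intro v' _ hv0'
    have hne : ∃ p, v' p ≠ 0 := ne_zero_iff_exists.mp hv0'
    exact (Set.ncard_pos (Set.toFinite _)).mpr hne
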